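/- For all natural numbers k, m and positive integers n, the function G_k(n,m) := Σ_{q≥0} binom(2n, n+m+q) * binom(2n, n+q) * (m+2q)^(2k+1) * f_q (with f_q = 1 for q ≠ 0, f_0 = 1/2, and G_k(-1,m) := 0, G_k(0,m) = 0) satisfies the recurrence G_{k+2}(n,m) = 2(4n^2+m^2) G_{k+1}(n,m) - (4n^2-m^2)^2 G_k(n,m) + 64 n^2 (2n-1)^2 G_k(n-1,m). -/

import Mathlib

/-- Binomial coefficient `n.choose k` extended to an integer lower index,
vanishing when `k < 0` (and, as usual, when `k > n`). -/
def ichoose (n : ℕ) (k : ℤ) : ℤ := if 0 ≤ k then (n.choose k.toNat : ℤ) else 0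

/-- The sum $G_k(n,m)$ with the weight $f_q$ ($f_0 = 1/2$, $f_q = 1$ otherwise). -/
noncomputable def G (k : ℕ) (n : ℕ) (m : ℤ) : ℚ :=
  ∑ᶠ q : ℕ, (ichoose (2 * n) (n + m + q) : ℚ) * (ichoose (2 * n) (n + q) : ℚ)
    * (m + 2 * q : ℚ) ^ (2 * k + 1) * (if q = 0 then (1 : ℚ) / 2 else 1)

lemma ichoose_zero_of_lt (N : ℕ) (j : ℤ) (h : (N : ℤ) < j) : ichoose N j = 0 := by
  unfold ichoose
  rw [if_pos (by omega : (0:ℤ) ≤ j)]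
  rw [Nat.choose_eq_zero_of_lt (by omega : N < j.toNat)]
  simp

lemma natkey (n a : ℕ) (hn : 1 ≤ n) (ha : 1 ≤ a) :
    Nat.choose (2 * n) a * a * (2 * n - a)
      = 2 * n * (2 * n - 1) * Nat.choose (2 * n - 2) (a - 1) := by
  rcases le_or_gt a (2 * n) with hle | hlt
  · have h1 := Nat.add_one_mul_choose_eq (2 * n - 1) (a - 1)
    have h2 := Nat.choose_mul_succ_eq (2 * n - 2) (a - 1)
    have e1 : 2 * n - 1 + 1 = 2 * n := by omega
    have e2 : a - 1 + 1 = a := by omega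
    have e3 : 2 * n - 2 + 1 = 2 * n - 1 := by omega
    have e4 : 2 * n - 1 - (a - 1) = 2 * n - a := by omega
    rw [e1, e2] at h1
    rw [e3, e4] at h2
    calc Nat.choose (2 * n) a * a * (2 * n - a)
        = 2 * n * Nat.choose (2 * n - 1) (a - 1) * (2 * n - a) := by rw [← h1]
      _ = 2 * n * (Nat.choose (2 * n - 1) (a - 1) * (2 * n - a)) := by ring
      _ = 2 * n * (Nat.choose (2 * n - 2) (a - 1) * (2 * n - 1)) := by rw [← h2]
      _ = 2 * n * (2 * n - 1) * Nat.choose (2 * n - 2) (a - 1) := by ring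
  · rw [Nat.choose_eq_zero_of_lt hlt, Nat.choose_eq_zero_of_lt (by omega : 2 * n - 2 < a - 1)]
    simp

lemma key (n : ℕ) (hn : 1 ≤ n) (j : ℤ) :
    (ichoose (2 * n) j : ℚ) * (j : ℚ) * (2 * (n : ℚ) - (j : ℚ))
      = (2 * (n : ℚ)) * (2 * (n : ℚ) - 1) * (ichoose (2 * (n - 1)) (j - 1) : ℚ) := by
  have hnn : (2 * (n - 1) : ℕ) = 2 * n - 2 := by omega
  rcases lt_trichotomy j 0 with hj | hj | hj
  · rw [show ichoose (2 * n) j = 0 by unfold ichoose; rw [if_neg (by omega)],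
      show ichoose (2 * (n - 1)) (j - 1) = 0 by unfold ichoose; rw [if_neg (by omega)]]
    simp
  · subst hj
    rw [show ichoose (2 * (n - 1)) (0 - 1) = 0 by unfold ichoose; rw [if_neg (by omega)]]
    simp
  · set a := j.toNat with hadef
    have hja : j = (a : ℤ) := by omega
    have ha : 1 ≤ a := by omega
    have hi1 : ichoose (2 * n) j = ((2 * n).choose a : ℤ) := by
      unfold ichoose; rw [if_pos (by omega)]
    have hi2 : ichoose (2 * (n - 1)) (j - 1) = ((2 * n - 2).choose (a - 1) : ℤ) := by
      unfold ichoose; rw [if_pos (by omega), hnn,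
        show (j - 1).toNat = a - 1 by omega]
    rw [hi1, hi2, hja]
    rcases le_or_gt a (2 * n) with hle | hlt
    · have := natkey n a hn ha
      have hc : ((2 * n : ℕ) : ℚ) - (a : ℚ) = ((2 * n - a : ℕ) : ℚ) := by
        push_cast [Nat.cast_sub hle]; ring
      have := congrArg (fun x : ℕ => (x : ℚ)) this
      push_cast [Nat.cast_sub hle, Nat.cast_sub (by omega : 2 ≤ 2 * n),
        Nat.cast_sub (by omega : 1 ≤ 2 * n)] at this
      push_cast
      linarith [this]
    · rw [Nat.choose_eq_zero_of_lt hlt, Nat.choose_eq_zero_of_lt (by omega : 2 * n - 2 < a - 1)]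
      simp

theorem stmt6 (k m : ℕ) (n : ℕ) (hn : 1 ≤ n) :
    G (k + 2) n m
      = 2 * (4 * (n : ℚ) ^ 2 + (m : ℚ) ^ 2) * G (k + 1) n m
        - (4 * (n : ℚ) ^ 2 - (m : ℚ) ^ 2) ^ 2 * G k n m
        + 64 * (n : ℚ) ^ 2 * (2 * (n : ℚ) - 1) ^ 2 * G k (n - 1) m := by
  have hsum : ∀ (k' n' : ℕ), n' ≤ n → G k' n' m
      = ∑ q ∈ Finset.range (n + 1),
        (ichoose (2 * n') (n' + m + q) : ℚ) * (ichoose (2 * n') (n' + q) : ℚ)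
          * ((m : ℚ) + 2 * q) ^ (2 * k' + 1) * (if q = 0 then (1 : ℚ) / 2 else 1) := by
    intro k' n' hn'
    unfold G
    apply finsum_eq_sum_of_support_subset
    intro q hq
    simp only [Function.mem_support] at hq
    simp only [Finset.coe_range, Set.mem_Iio]
    by_contra hc
    apply hq
    rw [ichoose_zero_of_lt (2 * n') ((n' : ℤ) + q) (by push_cast; omega)]
    simp
  rw [hsum (k + 2) n le_rfl, hsum (k + 1) n le_rfl, hsum k n le_rfl,
    hsum k (n - 1) (by omega), Finset.mul_sum, Finset.mul_sum, Finset.mul_sum,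
    ← Finset.sum_sub_distrib, ← Finset.sum_add_distrib]
  apply Finset.sum_congr rfl
  intro q _
  have hn1 : ((n - 1 : ℕ) : ℤ) = (n : ℤ) - 1 := by omega
  have hA := key n hn ((n : ℤ) + m + q)
  have hB := key n hn ((n : ℤ) + q)
  have eA : ((n : ℤ) + m + q - 1) = ((n - 1 : ℕ) : ℤ) + m + q := by omega
  have eB : ((n : ℤ) + q - 1) = ((n - 1 : ℕ) : ℤ) + q := by omega
  rw [eA] at hA
  rw [eB] at hB
  set A : ℚ := (ichoose (2 * n) ((n : ℤ) + m + q) : ℚ)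
  set B : ℚ := (ichoose (2 * n) ((n : ℤ) + q) : ℚ)
  set A' : ℚ := (ichoose (2 * (n - 1)) (((n - 1 : ℕ) : ℤ) + m + q) : ℚ)
  set B' : ℚ := (ichoose (2 * (n - 1)) (((n - 1 : ℕ) : ℤ) + q) : ℚ)
  set f : ℚ := (if q = 0 then (1 : ℚ) / 2 else 1)
  push_cast at hA hB ⊢
  linear_combination (16 * ((m : ℚ) + 2 * q) ^ (2 * k + 1) * f) *
    ((B * ((n : ℚ) + q) * ((n : ℚ) - q)) * hA
      + (2 * (n : ℚ) * (2 * (n : ℚ) - 1) * A') * hB)
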